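/- Let 0 ≤ a₁ ≤ a₂ ≤ ⋯ ≤ a_N ≤ 1/2 with m ≤ A + B·a_m for every 1 ≤ m ≤ N (where A, B ≥ 0), and let f : [0, 1/2] → ℝ be non-increasing and nonnegative. Then Σ_{m=1}^{N} f(a_m) ≤ A·f(0) + B·∫₀^{1/2} f(x) dx. -/
import Mathlib


open scoped Classical
open Filter Asymptotics MeasureTheory

noncomputable section

/-- The key inequality in the proof of Lemma 2. -/
theorem monotone_counting_inequality
    (N : ℕ) (hN : 0 < N) (a : ℕ → ℝ) (A B : ℝ) (hA : 0 ≤ A) (hB : 0 ≤ B)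
    (ha : ∀ m, 1 ≤ m → m ≤ N → a m ∈ Set.Icc (0:ℝ) (1/2))
    (hmono : ∀ m₁ m₂, 1 ≤ m₁ → m₁ ≤ m₂ → m₂ ≤ N → a m₁ ≤ a m₂)
    (hspace : ∀ m, 1 ≤ m → m ≤ N → (m : ℝ) ≤ A + B * a m)
    (f : ℝ → ℝ)
    (hfnonneg : ∀ x ∈ Set.Icc (0:ℝ) (1/2), 0 ≤ f x)
    (hfmono : AntitoneOn f (Set.Icc (0:ℝ) (1/2)))
    (hfint : IntervalIntegrable f volume 0 (1/2)) :
    ∑ m ∈ Finset.Icc 1 N, f (a m) ≤ A * f 0 + B * ∫ x in (0:ℝ)..(1/2), f x := by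
  have h0mem : (0:ℝ) ∈ Set.Icc (0:ℝ) (1/2) := by constructor <;> norm_num
  have hsub : ∀ u v : ℝ, u ∈ Set.Icc (0:ℝ) (1/2) → v ∈ Set.Icc (0:ℝ) (1/2) →
      IntervalIntegrable f volume u v := by
    intro u v hu hv
    refine hfint.mono_set ?_
    rw [Set.uIcc_of_le (by norm_num : (0:ℝ) ≤ 1/2)]
    exact Set.uIcc_subset_Icc hu hv
  -- lower bound on integrals over subintervals
  have hlow : ∀ u v : ℝ, u ∈ Set.Icc (0:ℝ) (1/2) → v ∈ Set.Icc (0:ℝ) (1/2) → u ≤ v →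
      (v - u) * f v ≤ ∫ x in u..v, f x := by
    intro u v hu hv huv
    have : ∫ x in u..v, f v ≤ ∫ x in u..v, f x := by
      apply intervalIntegral.integral_mono_on huv (by simp) (hsub u v hu hv)
      intro x hx
      have hxmem : x ∈ Set.Icc (0:ℝ) (1/2) := ⟨le_trans hu.1 hx.1, le_trans hx.2 hv.2⟩
      exact hfmono hxmem hv hx.2
    simpa [smul_eq_mul, mul_comm] using this
  have key : ∀ n, 1 ≤ n → n ≤ N →
      ∑ m ∈ Finset.Icc 1 n, f (a m) + (A + B * a n - n) * f (a n)
        ≤ A * f 0 + B * ∫ x in (0:ℝ)..(a n), f x := by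
    intro n hn
    induction n, hn using Nat.le_induction with
    | base =>
      intro h1N
      have ha1 := ha 1 le_rfl h1N
      have hf1 : f (a 1) ≤ f 0 := hfmono h0mem ha1 ha1.1
      have hf1n : 0 ≤ f (a 1) := hfnonneg _ ha1
      have hint : (a 1 - 0) * f (a 1) ≤ ∫ x in (0:ℝ)..(a 1), f x :=
        hlow 0 (a 1) h0mem ha1 ha1.1
      simp only [Finset.Icc_self, Finset.sum_singleton, Nat.cast_one]
      nlinarith [mul_le_mul_of_nonneg_left hf1 hA, mul_le_mul_of_nonneg_left hint hB]
    | succ n hn1 IH =>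
      intro hsN
      have hnN : n ≤ N := le_trans (Nat.le_succ n) hsN
      have IH' := IH hnN
      have hb := ha n hn1 hnN
      have hc := ha (n+1) (le_trans hn1 (Nat.le_succ n)) hsN
      have hbc : a n ≤ a (n+1) := hmono n (n+1) hn1 (Nat.le_succ n) hsN
      have hfb : f (a (n+1)) ≤ f (a n) := hfmono hb hc hbc
      have hfc0 : 0 ≤ f (a (n+1)) := hfnonneg _ hc
      have hs : (0:ℝ) ≤ A + B * a n - n := by
        have := hspace n hn1 hnN; linarith
      have hint : (a (n+1) - a n) * f (a (n+1)) ≤ ∫ x in (a n)..(a (n+1)), f x :=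
        hlow _ _ hb hc hbc
      have hadd : (∫ x in (0:ℝ)..(a n), f x) + (∫ x in (a n)..(a (n+1)), f x)
          = ∫ x in (0:ℝ)..(a (n+1)), f x :=
        intervalIntegral.integral_add_adjacent_intervals (hsub _ _ h0mem hb) (hsub _ _ hb hc)
      have hsum : ∑ m ∈ Finset.Icc 1 (n+1), f (a m)
          = ∑ m ∈ Finset.Icc 1 n, f (a m) + f (a (n+1)) := by
        rw [← Finset.sum_Icc_succ_top (by omega : 1 ≤ n + 1)]
      rw [hsum]
      push_cast
      have step : (A + B * a (n+1) - (n+1)) * f (a (n+1)) + f (a (n+1))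
          ≤ (A + B * a n - n) * f (a n) + B * ∫ x in (a n)..(a (n+1)), f x := by
        nlinarith [mul_le_mul_of_nonneg_left hint hB,
          mul_nonneg hs (sub_nonneg.mpr hfb)]
      push_cast at IH' step
      have hadd' : B * ((∫ x in (0:ℝ)..(a n), f x) + ∫ x in (a n)..(a (n+1)), f x)
          = B * ∫ x in (0:ℝ)..(a (n+1)), f x := by rw [hadd]
      linarith [IH', step, hadd'.ge, hadd'.le, (by ring : B * ((∫ x in (0:ℝ)..(a n), f x) + ∫ x in (a n)..(a (n+1)), f x) = B * (∫ x in (0:ℝ)..(a n), f x) + B * ∫ x in (a n)..(a (n+1)), f x)]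
  have hkey := key N hN le_rfl
  have haN := ha N hN le_rfl
  have hs : (0:ℝ) ≤ A + B * a N - N := by
    have := hspace N hN le_rfl; linarith
  have hfN : 0 ≤ f (a N) := hfnonneg _ haN
  have htail : 0 ≤ ∫ x in (a N)..(1/2:ℝ), f x := by
    apply intervalIntegral.integral_nonneg haN.2
    intro x hx
    exact hfnonneg x ⟨le_trans haN.1 hx.1, hx.2⟩
  have hadd : (∫ x in (0:ℝ)..(a N), f x) + (∫ x in (a N)..(1/2:ℝ), f x)
      = ∫ x in (0:ℝ)..(1/2:ℝ), f x :=
    intervalIntegral.integral_add_adjacent_intervals (hsub _ _ h0mem haN)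
      (hsub _ _ haN ⟨by norm_num, le_rfl⟩)
  have hadd' : B * ((∫ x in (0:ℝ)..(a N), f x) + ∫ x in (a N)..(1/2:ℝ), f x)
      = B * ∫ x in (0:ℝ)..(1/2:ℝ), f x := by rw [hadd]
  nlinarith [mul_nonneg hs hfN, mul_le_mul_of_nonneg_left htail hB, hadd'.le, hadd'.ge]
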